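/- Let X be a finite-dimensional Banach space containing a subspace Y isometric to ℓ₂² that is not 1-complemented in X. Then Π₂(X, X) is not strictly convex: there exist two distinct projections P₁, P₂ : X → Y extending the identity on Y with π₂(P₁) = π₂(P₂) = π₂(I_Y) = √2. -/

import Mathlib

open scoped BigOperators

/-- The 2-summing norm of a continuous linear operator between real normed spaces. -/
noncomputable def pi2 {X Y : Type*} [NormedAddCommGroup X] [NormedSpace ℝ X]
    [NormedAddCommGroup Y] [NormedSpace ℝ Y] (T : X →L[ℝ] Y) : ℝ :=
  sSup { r : ℝ | ∃ (m : ℕ) (x : Fin m → X),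
    (∀ f : X →L[ℝ] ℝ, ∑ i, (f (x i)) ^ 2 ≤ ‖f‖ ^ 2) ∧
    r = Real.sqrt (∑ i, ‖T (x i)‖ ^ 2) }

noncomputable def evec (c d : ℝ) : EuclideanSpace ℝ (Fin 2) := WithLp.toLp 2 ![c, d]

section Aux
variable {X : Type*} [NormedAddCommGroup X] [NormedSpace ℝ X]

lemma aux_indep {z₁ z₂ : X} (hz : ∀ a b : ℝ, ‖a • z₁ + b • z₂‖ ^ 2 = a ^ 2 + b ^ 2)
    {a b : ℝ} (h : a • z₁ + b • z₂ = 0) : a = 0 ∧ b = 0 := by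
  have h2 := hz a b
  rw [h, norm_zero] at h2
  constructor <;> nlinarith [sq_nonneg a, sq_nonneg b]

lemma aux_weak {z₁ z₂ : X} (hz : ∀ a b : ℝ, ‖a • z₁ + b • z₂‖ ^ 2 = a ^ 2 + b ^ 2)
    (f : X →L[ℝ] ℝ) : f z₁ ^ 2 + f z₂ ^ 2 ≤ ‖f‖ ^ 2 := by
  rcases eq_or_lt_of_le (by positivity : (0:ℝ) ≤ f z₁ ^ 2 + f z₂ ^ 2) with h | h
  · rw [← h]; positivity
  set s := Real.sqrt (f z₁ ^ 2 + f z₂ ^ 2) with hs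
  have hs0 : 0 < s := Real.sqrt_pos.2 h
  have hss : s ^ 2 = f z₁ ^ 2 + f z₂ ^ 2 := Real.sq_sqrt h.le
  set x := (f z₁ / s) • z₁ + (f z₂ / s) • z₂ with hx
  have h1 : ‖x‖ = 1 := by
    have h1' : ‖x‖ ^ 2 = 1 := by
      rw [hx, hz]; field_simp; linarith
    nlinarith [norm_nonneg x]
  have h2 : f x = s := by
    rw [hx]
    simp only [map_add, map_smul, smul_eq_mul]
    field_simp
    nlinarith
  have h3 : s ≤ ‖f‖ := by
    have := f.le_opNorm x
    rw [h1, mul_one, Real.norm_eq_abs, h2] at this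
    exact (le_abs_self s).trans this
  nlinarith

lemma pi2_eq_of {T : X →L[ℝ] X} {C : ℝ} (hC : 0 ≤ C)
    (hub : ∀ (m : ℕ) (x : Fin m → X), (∀ f : X →L[ℝ] ℝ, ∑ i, (f (x i)) ^ 2 ≤ ‖f‖ ^ 2) →
      ∑ i, ‖T (x i)‖ ^ 2 ≤ C ^ 2)
    (hmem : ∃ (m : ℕ) (x : Fin m → X), (∀ f : X →L[ℝ] ℝ, ∑ i, (f (x i)) ^ 2 ≤ ‖f‖ ^ 2) ∧
      ∑ i, ‖T (x i)‖ ^ 2 = C ^ 2) :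
    pi2 T = C := by
  have hub' : ∀ r ∈ { r : ℝ | ∃ (m : ℕ) (x : Fin m → X),
      (∀ f : X →L[ℝ] ℝ, ∑ i, (f (x i)) ^ 2 ≤ ‖f‖ ^ 2) ∧
      r = Real.sqrt (∑ i, ‖T (x i)‖ ^ 2) }, r ≤ C := by
    rintro r ⟨m, x, hx, rfl⟩
    calc Real.sqrt (∑ i, ‖T (x i)‖ ^ 2) ≤ Real.sqrt (C ^ 2) :=
          Real.sqrt_le_sqrt (hub m x hx)
      _ = C := Real.sqrt_sq hC
  obtain ⟨m, x, hx, hsum⟩ := hmem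
  refine le_antisymm (csSup_le ⟨Real.sqrt (∑ i : Fin 0, ‖T ((fun i => i.elim0) i)‖ ^ 2),
    0, (fun i => i.elim0), ?_, rfl⟩ hub') (le_csSup ⟨C, hub'⟩ ⟨m, x, hx, ?_⟩)
  · intro f; simp
  · rw [hsum, Real.sqrt_sq hC]

lemma aux_minkowski {m : ℕ} (u v : Fin m → ℝ) :
    ∑ i, (u i + v i) ^ 2 ≤
      (Real.sqrt (∑ i, u i ^ 2) + Real.sqrt (∑ i, v i ^ 2)) ^ 2 := by
  set U : EuclideanSpace ℝ (Fin m) := WithLp.toLp 2 u with hU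
  set V : EuclideanSpace ℝ (Fin m) := WithLp.toLp 2 v with hV
  have nU : ‖U‖ = Real.sqrt (∑ i, u i ^ 2) := by
    rw [EuclideanSpace.norm_eq]
    congr 1; apply Finset.sum_congr rfl; intro i _
    rw [Real.norm_eq_abs, sq_abs]
  have nV : ‖V‖ = Real.sqrt (∑ i, v i ^ 2) := by
    rw [EuclideanSpace.norm_eq]
    congr 1; apply Finset.sum_congr rfl; intro i _
    rw [Real.norm_eq_abs, sq_abs]
  have nUV : ‖U + V‖ ^ 2 = ∑ i, (u i + v i) ^ 2 := by
    rw [EuclideanSpace.norm_eq, Real.sq_sqrt (by positivity)]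
    apply Finset.sum_congr rfl; intro i _
    rw [Real.norm_eq_abs, sq_abs]
    rw [PiLp.add_apply]
  calc ∑ i, (u i + v i) ^ 2 = ‖U + V‖ ^ 2 := nUV.symm
    _ ≤ (‖U‖ + ‖V‖) ^ 2 := by
        have := norm_add_le U V
        nlinarith [norm_nonneg (U + V), norm_nonneg U, norm_nonneg V]
    _ = _ := by rw [nU, nV]

lemma master {Y : Submodule ℝ X} {z₁ z₂ : X} (hz₁ : z₁ ∈ Y) (hz₂ : z₂ ∈ Y)
    (hz : ∀ a b : ℝ, ‖a • z₁ + b • z₂‖ ^ 2 = a ^ 2 + b ^ 2)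
    {g₁ g₂ : X →L[ℝ] ℝ} (hg₁ : ‖g₁‖ ≤ 1) (hg₂ : ‖g₂‖ ≤ 1)
    (hrepr : ∀ y ∈ Y, g₁ y • z₁ + g₂ y • z₂ = y) :
    ∃ P : X →L[ℝ] X, (∀ x, P x = g₁ x • z₁ + g₂ x • z₂) ∧ (∀ x, P x ∈ Y) ∧
      (∀ y ∈ Y, P y = y) ∧
      (∀ (m : ℕ) (x : Fin m → X), (∀ f : X →L[ℝ] ℝ, ∑ i, (f (x i)) ^ 2 ≤ ‖f‖ ^ 2) →
        ∑ i, ‖P (x i)‖ ^ 2 ≤ 2) ∧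
      pi2 P = Real.sqrt 2 := by
  set P : X →L[ℝ] X := g₁.smulRight z₁ + g₂.smulRight z₂ with hP
  have hform : ∀ x, P x = g₁ x • z₁ + g₂ x • z₂ := fun x => rfl
  have hfix : ∀ y ∈ Y, P y = y := by
    intro y hy; rw [hform]; exact hrepr y hy
  have hub : ∀ (m : ℕ) (x : Fin m → X), (∀ f : X →L[ℝ] ℝ, ∑ i, (f (x i)) ^ 2 ≤ ‖f‖ ^ 2) →
      ∑ i, ‖P (x i)‖ ^ 2 ≤ 2 := by
    intro m x hx
    calc ∑ i, ‖P (x i)‖ ^ 2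
        = ∑ i, ((g₁ (x i)) ^ 2 + (g₂ (x i)) ^ 2) := by
          apply Finset.sum_congr rfl; intro i _; rw [hform]; exact hz _ _
      _ = (∑ i, (g₁ (x i)) ^ 2) + ∑ i, (g₂ (x i)) ^ 2 := Finset.sum_add_distrib
      _ ≤ ‖g₁‖ ^ 2 + ‖g₂‖ ^ 2 := add_le_add (hx g₁) (hx g₂)
      _ ≤ 2 := by nlinarith [norm_nonneg g₁, norm_nonneg g₂]
  have n1 : ‖z₁‖ ^ 2 = 1 := by have := hz 1 0; simpa using this
  have n2 : ‖z₂‖ ^ 2 = 1 := by have := hz 0 1; simpa using this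
  refine ⟨P, hform, ?_, hfix, hub, ?_⟩
  · intro x
    rw [hform]
    exact Y.add_mem (Y.smul_mem _ hz₁) (Y.smul_mem _ hz₂)
  · apply pi2_eq_of (Real.sqrt_nonneg 2)
    · intro m x hx
      rw [Real.sq_sqrt (by norm_num : (0:ℝ) ≤ 2)]
      exact hub m x hx
    · refine ⟨2, ![z₁, z₂], ?_, ?_⟩
      · intro f
        rw [Fin.sum_univ_two]
        simp only [Matrix.cons_val_zero, Matrix.cons_val_one, Matrix.head_cons]
        exact aux_weak hz f
      · rw [Real.sq_sqrt (by norm_num : (0:ℝ) ≤ 2), Fin.sum_univ_two]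
        simp only [Matrix.cons_val_zero, Matrix.cons_val_one, Matrix.head_cons]
        rw [hfix z₁ hz₁, hfix z₂ hz₂, n1, n2]
        norm_num

lemma ell2_data [FiniteDimensional ℝ X] (Y : Submodule ℝ X)
    (e : Y ≃ₗᵢ[ℝ] EuclideanSpace ℝ (Fin 2)) {c d : ℝ} (hcd : c ^ 2 + d ^ 2 = 1) :
    ∃ g₁ g₂ : X →L[ℝ] ℝ, ‖g₁‖ ≤ 1 ∧ ‖g₂‖ ≤ 1 ∧
      (∀ a b : ℝ, ‖a • (↑(e.symm (evec c d)) : X) + b • (↑(e.symm (evec (-d) c)) : X)‖ ^ 2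
        = a ^ 2 + b ^ 2) ∧
      (∀ y ∈ Y, ∀ G₁ G₂ : X →L[ℝ] ℝ,
        (∀ z : Y, G₁ z = c * (e z) 0 + d * (e z) 1) →
        (∀ z : Y, G₂ z = -d * (e z) 0 + c * (e z) 1) → True) ∧
      (∀ y ∈ Y, g₁ y • (↑(e.symm (evec c d)) : X) + g₂ y • (↑(e.symm (evec (-d) c)) : X) = y) := by
  classical
  have hE : ∀ a b : ℝ, ‖a • evec c d + b • evec (-d) c‖ ^ 2 = a ^ 2 + b ^ 2 := by
    intro a b
    rw [EuclideanSpace.norm_eq, Real.sq_sqrt (by positivity)]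
    simp [evec, Fin.sum_univ_two, PiLp.add_apply, PiLp.smul_apply]
    ring_nf
    nlinarith [hcd]
  have hreprE : ∀ w : EuclideanSpace ℝ (Fin 2),
      (c * w 0 + d * w 1) • evec c d + (-d * w 0 + c * w 1) • evec (-d) c = w := by
    intro w
    ext i
    fin_cases i <;> simp [evec, PiLp.add_apply, PiLp.smul_apply] <;>
      [linear_combination (w 0) * hcd; linear_combination (w 1) * hcd]
  have hzz : ∀ a b : ℝ,
      ‖a • (↑(e.symm (evec c d)) : X) + b • (↑(e.symm (evec (-d) c)) : X)‖ ^ 2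
        = a ^ 2 + b ^ 2 := by
    intro a b
    have hc : a • (↑(e.symm (evec c d)) : X) + b • (↑(e.symm (evec (-d) c)) : X)
        = ↑(e.symm (a • evec c d + b • evec (-d) c)) := by
      rw [map_add, map_smul, map_smul]
      push_cast
      ring
    rw [hc, ← Submodule.coe_norm, LinearIsometryEquiv.norm_map, hE]
  haveI : FiniteDimensional ℝ Y := inferInstance
  have hbound : ∀ (p q : ℝ), p ^ 2 + q ^ 2 = 1 → ∀ y : Y,
      |p * (e y) 0 + q * (e y) 1| ≤ ‖y‖ := by
    intro p q hpq y
    have h1 : ‖y‖ = ‖e y‖ := (e.norm_map y).symm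
    rw [h1, EuclideanSpace.norm_eq, ← Real.sqrt_sq_eq_abs]
    apply Real.sqrt_le_sqrt
    rw [Fin.sum_univ_two]
    simp only [Real.norm_eq_abs, sq_abs]
    nlinarith [sq_nonneg (q * (e y) 0 - p * (e y) 1)]
  let ψ₁ : Y →ₗ[ℝ] ℝ :=
    { toFun := fun y => c * (e y) 0 + d * (e y) 1
      map_add' := by intro y z; simp [PiLp.add_apply]; ring
      map_smul' := by intro t y; simp [PiLp.smul_apply]; ring }
  let ψ₂ : Y →ₗ[ℝ] ℝ :=
    { toFun := fun y => -d * (e y) 0 + c * (e y) 1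
      map_add' := by intro y z; simp [PiLp.add_apply]; ring
      map_smul' := by intro t y; simp [PiLp.smul_apply]; ring }
  obtain ⟨g₁, hg₁ext, hg₁norm⟩ :=
    exists_extension_norm_eq Y (LinearMap.toContinuousLinearMap ψ₁)
  obtain ⟨g₂, hg₂ext, hg₂norm⟩ :=
    exists_extension_norm_eq Y (LinearMap.toContinuousLinearMap ψ₂)
  have hΨ₁ : ‖LinearMap.toContinuousLinearMap ψ₁‖ ≤ 1 := by
    apply ContinuousLinearMap.opNorm_le_bound _ zero_le_one
    intro y
    rw [one_mul]
    exact hbound c d hcd y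
  have hΨ₂ : ‖LinearMap.toContinuousLinearMap ψ₂‖ ≤ 1 := by
    apply ContinuousLinearMap.opNorm_le_bound _ zero_le_one
    intro y
    rw [one_mul]
    exact hbound (-d) c (by nlinarith) y
  refine ⟨g₁, g₂, hg₁norm.le.trans hΨ₁, hg₂norm.le.trans hΨ₂, hzz,
    fun _ _ _ _ _ _ => trivial, ?_⟩
  intro y hy
  have hg₁y : g₁ y = c * (e ⟨y, hy⟩) 0 + d * (e ⟨y, hy⟩) 1 := hg₁ext ⟨y, hy⟩
  have hg₂y : g₂ y = -d * (e ⟨y, hy⟩) 0 + c * (e ⟨y, hy⟩) 1 := hg₂ext ⟨y, hy⟩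
  rw [hg₁y, hg₂y]
  have hY : (c * (e ⟨y, hy⟩) 0 + d * (e ⟨y, hy⟩) 1) • e.symm (evec c d)
      + (-d * (e ⟨y, hy⟩) 0 + c * (e ⟨y, hy⟩) 1) • e.symm (evec (-d) c) = ⟨y, hy⟩ := by
    apply e.injective
    rw [map_add, map_smul, map_smul, e.apply_symm_apply, e.apply_symm_apply]
    exact hreprE (e ⟨y, hy⟩)
  calc (c * (e ⟨y, hy⟩) 0 + d * (e ⟨y, hy⟩) 1) • (↑(e.symm (evec c d)) : X)
      + (-d * (e ⟨y, hy⟩) 0 + c * (e ⟨y, hy⟩) 1) • (↑(e.symm (evec (-d) c)) : X)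
      = ↑((c * (e ⟨y, hy⟩) 0 + d * (e ⟨y, hy⟩) 1) • e.symm (evec c d)
        + (-d * (e ⟨y, hy⟩) 0 + c * (e ⟨y, hy⟩) 1) • e.symm (evec (-d) c)) := by
        push_cast; ring
    _ = y := by rw [hY]

end Aux

set_option maxHeartbeats 1000000 in
/-- If `X` contains a subspace isometric to `ℓ₂²` that is not 1-complemented, then `Π₂(X,X)` is
not strictly convex: there are two distinct norm-`√2` (in the `π₂` norm) projections onto the
subspace extending the identity. -/
theorem pi2_not_strictly_convex_of_non_complemented_ell2
    {X : Type*} [NormedAddCommGroup X] [NormedSpace ℝ X] [FiniteDimensional ℝ X]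
    (Y : Submodule ℝ X) (hiso : Nonempty (Y ≃ₗᵢ[ℝ] EuclideanSpace ℝ (Fin 2)))
    (hnotcompl : ¬ ∃ P : X →L[ℝ] X,
      (∀ x : X, P x ∈ Y) ∧ (∀ y ∈ Y, P y = y) ∧ ‖P‖ = 1) :
    (∃ P₁ P₂ : X →L[ℝ] X, P₁ ≠ P₂ ∧
      (∀ x : X, P₁ x ∈ Y) ∧ (∀ y ∈ Y, P₁ y = y) ∧
      (∀ x : X, P₂ x ∈ Y) ∧ (∀ y ∈ Y, P₂ y = y) ∧
      pi2 P₁ = Real.sqrt 2 ∧ pi2 P₂ = Real.sqrt 2) ∧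
    ¬ (∀ S T : X →L[ℝ] X, pi2 S = pi2 T → pi2 S = pi2 (S + T) / 2 → S = T) := by
  obtain ⟨e⟩ := hiso
  obtain ⟨f₁, f₂, hf₁, hf₂, hyz, -, hyrepr⟩ :=
    ell2_data Y e (show (1:ℝ) ^ 2 + (0:ℝ) ^ 2 = 1 by norm_num)
  obtain ⟨P₁, hP₁form, hP₁mem, hP₁fix, hP₁ub, hP₁pi2⟩ :=
    master (Submodule.coe_mem _) (Submodule.coe_mem _) hyz hf₁ hf₂ hyrepr
  simp only [neg_zero] at hyz hyrepr hP₁form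
  set y₁ : X := (↑(e.symm (evec 1 0)) : X) with hy₁def
  set y₂ : X := (↑(e.symm (evec 0 1)) : X) with hy₂def
  have hy₁mem : y₁ ∈ Y := Submodule.coe_mem _
  have hy₂mem : y₂ ∈ Y := Submodule.coe_mem _
  have hy₁norm : ‖y₁‖ ^ 2 = 1 := by have := hyz 1 0; simpa using this
  have hy₂norm : ‖y₂‖ ^ 2 = 1 := by have := hyz 0 1; simpa using this
  have hy₁n : ‖y₁‖ = 1 := by nlinarith [norm_nonneg y₁]
  have hy₂n : ‖y₂‖ = 1 := by nlinarith [norm_nonneg y₂]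
  -- ‖P₁‖ > 1
  have hP₁ge : 1 ≤ ‖P₁‖ := by
    have h1 := P₁.le_opNorm y₁
    rw [hP₁fix y₁ hy₁mem, hy₁n, mul_one] at h1
    exact h1
  have hP₁ne1 : ‖P₁‖ ≠ 1 := fun h => hnotcompl ⟨P₁, hP₁mem, hP₁fix, h⟩
  have hbig : ¬ (∀ x : X, ‖P₁ x‖ ≤ 1 * ‖x‖) := by
    intro h
    exact hP₁ne1 (le_antisymm (P₁.opNorm_le_bound zero_le_one h) hP₁ge)
  push_neg at hbig
  obtain ⟨x₀, hx₀⟩ := hbig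
  rw [one_mul] at hx₀
  have hx₀ne : x₀ ≠ 0 := by
    rintro rfl
    rw [map_zero] at hx₀
    exact absurd hx₀ (lt_irrefl _)
  have hx₀pos : 0 < ‖x₀‖ := norm_pos_iff.2 hx₀ne
  set x' : X := ‖x₀‖⁻¹ • x₀ with hx'def
  have hx'norm : ‖x'‖ = 1 := by
    rw [hx'def, norm_smul, Real.norm_eq_abs, abs_inv, abs_norm, inv_mul_cancel₀ hx₀pos.ne']
  have hr : 1 < ‖P₁ x'‖ := by
    rw [hx'def, map_smul, norm_smul, Real.norm_eq_abs, abs_inv, abs_norm]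
    calc (1:ℝ) = ‖x₀‖⁻¹ * ‖x₀‖ := (inv_mul_cancel₀ hx₀pos.ne').symm
      _ < ‖x₀‖⁻¹ * ‖P₁ x₀‖ := by
          exact mul_lt_mul_of_pos_left hx₀ (inv_pos.2 hx₀pos)
  set a : ℝ := f₁ x' with hadef
  set b : ℝ := f₂ x' with hbdef
  set r : ℝ := ‖P₁ x'‖ with hrdef
  have hr0 : 0 < r := lt_trans one_pos hr
  have hab : r ^ 2 = a ^ 2 + b ^ 2 := by
    rw [hrdef, hP₁form x']
    exact hyz a b
  have hcd : (a / r) ^ 2 + (b / r) ^ 2 = 1 := by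
    field_simp
    linarith
  obtain ⟨g₁, g₂, hg₁, hg₂, hzz, -, hzrepr⟩ := ell2_data Y e hcd
  obtain ⟨P₂, hP₂form, hP₂mem, hP₂fix, hP₂ub, hP₂pi2⟩ :=
    master (Submodule.coe_mem _) (Submodule.coe_mem _) hzz hg₁ hg₂ hzrepr
  set z₁ : X := (↑(e.symm (evec (a / r) (b / r))) : X) with hz₁def
  set z₂ : X := (↑(e.symm (evec (-(b / r)) (a / r))) : X) with hz₂def
  -- the key identity : P₁ x' = r • z₁
  have hkey : P₁ x' = r • z₁ := by
    rw [hP₁form x']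
    have h1 : r • (evec (a / r) (b / r)) = a • evec 1 0 + b • evec 0 1 := by
      ext i
      fin_cases i <;> simp [evec, PiLp.add_apply, PiLp.smul_apply] <;> field_simp
    have k1 : a • y₁ + b • y₂ = ↑(e.symm (a • evec 1 0 + b • evec 0 1)) := by
      rw [map_add, map_smul, map_smul, Submodule.coe_add, Submodule.coe_smul,
        Submodule.coe_smul]
    have k2 : r • z₁ = ↑(e.symm (r • evec (a / r) (b / r))) := by
      rw [map_smul, Submodule.coe_smul]
    rw [k1, k2, h1]
  have hne : P₁ ≠ P₂ := by
    intro h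
    have heq : r • z₁ = g₁ x' • z₁ + g₂ x' • z₂ := by
      rw [← hkey, h, hP₂form x']
    have h3 : (r - g₁ x') • z₁ + (0 - g₂ x') • z₂ = 0 := by
      rw [sub_smul, sub_smul, zero_smul, zero_sub, heq]
      abel
    obtain ⟨h4, h5⟩ := aux_indep hzz h3
    have h6 : g₁ x' = r := by linarith
    have h7 : |g₁ x'| ≤ 1 := by
      have := g₁.le_opNorm x'
      rw [hx'norm, mul_one, Real.norm_eq_abs] at this
      exact this.trans hg₁
    rw [h6, abs_of_pos hr0] at h7
    linarith
  have hs2 : Real.sqrt 2 ^ 2 = 2 := Real.sq_sqrt (by norm_num)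
  have hsum : pi2 (P₁ + P₂) = 2 * Real.sqrt 2 := by
    apply pi2_eq_of (by positivity)
    · intro m x hx
      have h8 : (2 * Real.sqrt 2) ^ 2 = 8 := by
        rw [mul_pow, hs2]; norm_num
      rw [h8]
      calc ∑ i, ‖(P₁ + P₂) (x i)‖ ^ 2
          ≤ ∑ i, (‖P₁ (x i)‖ + ‖P₂ (x i)‖) ^ 2 := by
            apply Finset.sum_le_sum
            intro i _
            have h9 : (P₁ + P₂) (x i) = P₁ (x i) + P₂ (x i) := rfl
            rw [h9]
            have := norm_add_le (P₁ (x i)) (P₂ (x i))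
            nlinarith [norm_nonneg (P₁ (x i) + P₂ (x i)), norm_nonneg (P₁ (x i)),
              norm_nonneg (P₂ (x i))]
        _ ≤ (Real.sqrt (∑ i, ‖P₁ (x i)‖ ^ 2) + Real.sqrt (∑ i, ‖P₂ (x i)‖ ^ 2)) ^ 2 :=
            aux_minkowski _ _
        _ ≤ (Real.sqrt 2 + Real.sqrt 2) ^ 2 := by
            have m1 : Real.sqrt (∑ i, ‖P₁ (x i)‖ ^ 2) ≤ Real.sqrt 2 :=
              Real.sqrt_le_sqrt (hP₁ub m x hx)
            have m2 : Real.sqrt (∑ i, ‖P₂ (x i)‖ ^ 2) ≤ Real.sqrt 2 :=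
              Real.sqrt_le_sqrt (hP₂ub m x hx)
            have n1 : 0 ≤ Real.sqrt (∑ i, ‖P₁ (x i)‖ ^ 2) := Real.sqrt_nonneg _
            have n2 : 0 ≤ Real.sqrt (∑ i, ‖P₂ (x i)‖ ^ 2) := Real.sqrt_nonneg _
            nlinarith
        _ = 8 := by nlinarith [hs2]
    · refine ⟨2, ![y₁, y₂], ?_, ?_⟩
      · intro f
        rw [Fin.sum_univ_two]
        simp only [Matrix.cons_val_zero, Matrix.cons_val_one, Matrix.head_cons]
        exact aux_weak hyz f
      · rw [Fin.sum_univ_two]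
        simp only [Matrix.cons_val_zero, Matrix.cons_val_one, Matrix.head_cons]
        have e1 : (P₁ + P₂) y₁ = y₁ + y₁ := by
          have h9 : (P₁ + P₂) y₁ = P₁ y₁ + P₂ y₁ := rfl
          rw [h9, hP₁fix y₁ hy₁mem, hP₂fix y₁ hy₁mem]
        have e2 : (P₁ + P₂) y₂ = y₂ + y₂ := by
          have h9 : (P₁ + P₂) y₂ = P₁ y₂ + P₂ y₂ := rfl
          rw [h9, hP₁fix y₂ hy₂mem, hP₂fix y₂ hy₂mem]
        have e3 : ‖y₁ + y₁‖ = 2 := by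
          have : y₁ + y₁ = (2:ℝ) • y₁ := (two_smul ℝ y₁).symm
          rw [this, norm_smul, hy₁n, Real.norm_eq_abs]
          norm_num
        have e4 : ‖y₂ + y₂‖ = 2 := by
          have : y₂ + y₂ = (2:ℝ) • y₂ := (two_smul ℝ y₂).symm
          rw [this, norm_smul, hy₂n, Real.norm_eq_abs]
          norm_num
        rw [e1, e2, e3, e4, mul_pow, hs2]
        norm_num
  refine ⟨⟨P₁, P₂, hne, hP₁mem, hP₁fix, hP₂mem, hP₂fix, hP₁pi2, hP₂pi2⟩, ?_⟩
  intro h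
  apply hne
  apply h P₁ P₂ (hP₁pi2.trans hP₂pi2.symm)
  rw [hP₁pi2, hsum]
  ring
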